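/- In ℚ⟦q⟧, let a := ∑_{n≥0} q^{n²+n}/(q;q)_n, F₂ := 11·a + 60·q·(da/dq), E₆ := 1 − 504·∑_{n≥1} σ₅(n)q^n, E₈ := 1 + 480·∑_{n≥1} σ₇(n)q^n, and let F₈ := (1/6)·(1309·E₈·a + 235·E₆·F₂). Then the coefficients of q⁰, q¹, q², q³, q⁴ in F₈ are 649, −112420, 6348609, 173671679, 1424241669. -/

import Mathlib

open PowerSeries

/-- The q-Pochhammer symbol `(q;q)_n = ∏_{j=1}^n (1 − q^j)` in `ℚ⟦q⟧`. -/
noncomputable def qPoch (n : ℕ) : PowerSeries ℚ :=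
  ∏ j ∈ Finset.Icc 1 n, (1 - (PowerSeries.X : PowerSeries ℚ) ^ j)

/-- The series `a = ∑_{n≥0} q^{n²+n}/(q;q)_n`, defined coefficientwise. -/
noncomputable def rrA : PowerSeries ℚ :=
  PowerSeries.mk fun h =>
    PowerSeries.coeff h
      (∑ n ∈ Finset.range (h + 1), PowerSeries.X ^ (n ^ 2 + n) * (qPoch n)⁻¹)

/-- The operation `q·d/dq`, multiplying the coefficient of `q^n` by `n`. -/
noncomputable def qDq (f : PowerSeries ℚ) : PowerSeries ℚ :=
  PowerSeries.mk fun n => (n : ℚ) * PowerSeries.coeff n f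

/-- `F₂ = 11·a + 60·q·(da/dq)`. -/
noncomputable def F₂ : PowerSeries ℚ := 11 * rrA + 60 * qDq rrA

/-- The Eisenstein series `E₆ = 1 − 504·∑_{n≥1} σ₅(n)q^n` as a q-expansion. -/
noncomputable def E₆ : PowerSeries ℚ :=
  PowerSeries.mk fun n =>
    if n = 0 then 1 else -504 * ∑ d ∈ Nat.divisors n, (d : ℚ) ^ 5

/-- The Eisenstein series `E₈ = 1 + 480·∑_{n≥1} σ₇(n)q^n` as a q-expansion. -/
noncomputable def E₈ : PowerSeries ℚ :=
  PowerSeries.mk fun n =>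
    if n = 0 then 1 else 480 * ∑ d ∈ Nat.divisors n, (d : ℚ) ^ 7

/-- `F₈ = (1/6)·(1309·E₈·a + 235·E₆·F₂)`. -/
noncomputable def F₈ : PowerSeries ℚ :=
  PowerSeries.C (1/6 : ℚ) * (1309 * E₈ * rrA + 235 * E₆ * F₂)

lemma one_sub_X_inv : ((1 - X : PowerSeries ℚ))⁻¹ = PowerSeries.mk fun _ => 1 := by
  symm
  rw [PowerSeries.eq_inv_iff_mul_eq_one (by simp)]
  ext n
  rw [mul_sub, mul_one, map_sub]
  cases n with
  | zero => simp
  | succ m => simp [PowerSeries.coeff_succ_mul_X, PowerSeries.coeff_one]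

lemma coeff_X_pow_mul' (p : PowerSeries ℚ) (n d : ℕ) :
    PowerSeries.coeff n (X ^ d * p) = if d ≤ n then PowerSeries.coeff (n - d) p else 0 := by
  rw [mul_comm]; exact PowerSeries.coeff_mul_X_pow' p d n

lemma qPoch_zero : qPoch 0 = 1 := by simp [qPoch]
lemma qPoch_one : qPoch 1 = 1 - X := by simp [qPoch]

lemma coeff_rrA : ∀ h ≤ 4, PowerSeries.coeff h rrA = ([1,0,1,1,1] : List ℚ).getD h 0 := by
  intro h hh
  interval_cases h <;>
    simp [rrA, Finset.sum_range_succ, qPoch_zero, qPoch_one, one_sub_X_inv,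
      coeff_X_pow_mul', PowerSeries.coeff_one]

lemma coeff_F₂ : ∀ h ≤ 4, PowerSeries.coeff h F₂ = ([11,0,131,191,251] : List ℚ).getD h 0 := by
  intro h hh
  have h11 : (11 : PowerSeries ℚ) = PowerSeries.C 11 := (map_ofNat PowerSeries.C 11).symm
  have h60 : (60 : PowerSeries ℚ) = PowerSeries.C 60 := (map_ofNat PowerSeries.C 60).symm
  have := coeff_rrA h hh
  rw [F₂, map_add, h11, h60, PowerSeries.coeff_C_mul, PowerSeries.coeff_C_mul]
  rw [qDq, PowerSeries.coeff_mk, this]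
  interval_cases h <;> norm_num

lemma coeff_E₆ : ∀ h ≤ 4,
    PowerSeries.coeff h E₆ = ([1,-504,-16632,-122976,-532728] : List ℚ).getD h 0 := by
  intro h hh
  interval_cases h <;>
  · rw [E₆, PowerSeries.coeff_mk]
    norm_num [show Nat.divisors 2 = {1,2} by decide, show Nat.divisors 3 = {1,3} by decide,
        show Nat.divisors 4 = {1,2,4} by decide, Nat.divisors_one]

lemma coeff_E₈ : ∀ h ≤ 4,
    PowerSeries.coeff h E₈ = ([1,480,61920,1050240,7926240] : List ℚ).getD h 0 := by
  intro h hh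
  interval_cases h <;>
  · rw [E₈, PowerSeries.coeff_mk]
    norm_num [show Nat.divisors 2 = {1,2} by decide, show Nat.divisors 3 = {1,3} by decide,
        show Nat.divisors 4 = {1,2,4} by decide, Nat.divisors_one]

lemma cA0 : PowerSeries.coeff 0 rrA = 1 := by have := coeff_rrA 0 (by norm_num); simpa using this
lemma cA1 : PowerSeries.coeff 1 rrA = 0 := by have := coeff_rrA 1 (by norm_num); simpa using this
lemma cA2 : PowerSeries.coeff 2 rrA = 1 := by have := coeff_rrA 2 (by norm_num); simpa using this
lemma cA3 : PowerSeries.coeff 3 rrA = 1 := by have := coeff_rrA 3 (by norm_num); simpa using this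
lemma cA4 : PowerSeries.coeff 4 rrA = 1 := by have := coeff_rrA 4 (by norm_num); simpa using this
lemma cF0 : PowerSeries.coeff 0 F₂ = 11 := by have := coeff_F₂ 0 (by norm_num); simpa using this
lemma cF1 : PowerSeries.coeff 1 F₂ = 0 := by have := coeff_F₂ 1 (by norm_num); simpa using this
lemma cF2 : PowerSeries.coeff 2 F₂ = 131 := by have := coeff_F₂ 2 (by norm_num); simpa using this
lemma cF3 : PowerSeries.coeff 3 F₂ = 191 := by have := coeff_F₂ 3 (by norm_num); simpa using this
lemma cF4 : PowerSeries.coeff 4 F₂ = 251 := by have := coeff_F₂ 4 (by norm_num); simpa using this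
lemma cE60 : PowerSeries.coeff 0 E₆ = 1 := by have := coeff_E₆ 0 (by norm_num); simpa using this
lemma cE61 : PowerSeries.coeff 1 E₆ = -504 := by have := coeff_E₆ 1 (by norm_num); simpa using this
lemma cE62 : PowerSeries.coeff 2 E₆ = -16632 := by have := coeff_E₆ 2 (by norm_num); simpa using this
lemma cE63 : PowerSeries.coeff 3 E₆ = -122976 := by have := coeff_E₆ 3 (by norm_num); simpa using this
lemma cE64 : PowerSeries.coeff 4 E₆ = -532728 := by have := coeff_E₆ 4 (by norm_num); simpa using this
lemma cE80 : PowerSeries.coeff 0 E₈ = 1 := by have := coeff_E₈ 0 (by norm_num); simpa using this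
lemma cE81 : PowerSeries.coeff 1 E₈ = 480 := by have := coeff_E₈ 1 (by norm_num); simpa using this
lemma cE82 : PowerSeries.coeff 2 E₈ = 61920 := by have := coeff_E₈ 2 (by norm_num); simpa using this
lemma cE83 : PowerSeries.coeff 3 E₈ = 1050240 := by have := coeff_E₈ 3 (by norm_num); simpa using this
lemma cE84 : PowerSeries.coeff 4 E₈ = 7926240 := by have := coeff_E₈ 4 (by norm_num); simpa using this

theorem coeff_F8 :
    ∀ n : ℕ, n ≤ 4 → PowerSeries.coeff n F₈ =
      ([649, -112420, 6348609, 173671679, 1424241669] : List ℚ).getD n 0 := by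
  intro n hn
  have h1 : (1309 : PowerSeries ℚ) = PowerSeries.C 1309 := (map_ofNat PowerSeries.C 1309).symm
  have h2 : (235 : PowerSeries ℚ) = PowerSeries.C 235 := (map_ofNat PowerSeries.C 235).symm
  have key : PowerSeries.coeff n F₈ =
      (1/6) * (1309 * PowerSeries.coeff n (E₈ * rrA) +
        235 * PowerSeries.coeff n (E₆ * F₂)) := by
    rw [F₈, PowerSeries.coeff_C_mul, map_add, h1, h2, mul_assoc, mul_assoc,
      PowerSeries.coeff_C_mul, PowerSeries.coeff_C_mul]
  rw [key, PowerSeries.coeff_mul, PowerSeries.coeff_mul,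
    Finset.Nat.sum_antidiagonal_eq_sum_range_succ_mk,
    Finset.Nat.sum_antidiagonal_eq_sum_range_succ_mk]
  interval_cases n <;>
  · simp only [Finset.sum_range_succ, Finset.sum_range_zero]
    norm_num [cA0,cA1,cA2,cA3,cA4,cF0,cF1,cF2,cF3,cF4,cE60,cE61,cE62,cE63,cE64,
      cE80,cE81,cE82,cE83,cE84]
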